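/- arXiv:2007.15682 — 5 statements merged into one kernel-verified Lean document; each statement's English description precedes it below -/
import Mathlib

section
/- Let n > 1 be an integer that is not a prime power, and let d_1 < ⋯ < d_k < n be divisors of n (with 1 < k) such that d_i ∤ d_j for i ≠ j. Then the number of k-tuples (x_1, …, x_k) ∈ F_{q^{d_1}} × ⋯ × F_{q^{d_k}} (viewed inside F_{q^n}) with x_1 + ⋯ + x_k = 0 equals q^{d_1 + ⋯ + d_k − λ}, where λ = deg(lcm(x^{d_1} − 1, …, x^{d_k} − 1)). -/
open Finset Polynomial

section Helpers

variable {p q : ℕ} [Fact p.Prime] {K : Type*} [Field K] [Fintype K]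
  [Algebra (ZMod p) K]

/-- iterate of the `q`-power map. -/
lemma pow_apply_of_pow (F : Module.End (ZMod p) K) (hF : ∀ x, F x = x ^ q) (j : ℕ) (x : K) :
    (F ^ j) x = x ^ q ^ j := by
  induction j generalizing x with
  | zero => simp
  | succ m ih =>
      rw [pow_succ, Module.End.mul_apply, ih, hF, ← pow_mul, ← pow_succ']

lemma mem_ker_aeval_X_pow_sub_one (F : Module.End (ZMod p) K) (hF : ∀ x, F x = x ^ q)
    (m : ℕ) (x : K) :
    x ∈ LinearMap.ker (aeval F ((X : (ZMod p)[X]) ^ m - 1)) ↔ x ^ q ^ m = x := by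
  rw [LinearMap.mem_ker, map_sub, aeval_X_pow, map_one, LinearMap.sub_apply,
    Module.End.one_apply, pow_apply_of_pow F hF, sub_eq_zero]

/-- Upper bound: the kernel of `h(F)` has at most `q ^ deg h` elements. -/
lemma card_ker_aeval_le (hq2 : 1 < q) (F : Module.End (ZMod p) K) (hF : ∀ x, F x = x ^ q)
    (h : (ZMod p)[X]) (hh : h ≠ 0) :
    Nat.card (LinearMap.ker (aeval F h)) ≤ q ^ h.natDegree := by
  classical
  set D := h.natDegree with hD
  set P : K[X] := ∑ j ∈ Finset.range (D + 1),
      C (algebraMap (ZMod p) K (h.coeff j)) * X ^ q ^ j with hP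
  have hev : ∀ x : K, P.eval x = (aeval F h) x := by
    intro x
    rw [aeval_eq_sum_range, LinearMap.sum_apply, hP, eval_finset_sum]
    refine Finset.sum_congr rfl fun j _ => ?_
    rw [eval_mul, eval_C, eval_pow, eval_X, LinearMap.smul_apply,
      pow_apply_of_pow F hF, Algebra.smul_def]
  have hcoeff : P.coeff (q ^ D) = algebraMap (ZMod p) K (h.coeff D) := by
    rw [hP, finset_sum_coeff]
    rw [Finset.sum_eq_single D]
    · simp [coeff_X_pow]
    · intro j _ hj
      have hne : q ^ D ≠ q ^ j := fun hc => hj ((Nat.pow_right_injective hq2 hc).symm)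
      simp [coeff_X_pow, hne]
    · intro hD'
      exact absurd (Finset.self_mem_range_succ D) hD'
  have hP0 : P ≠ 0 := by
    intro hc
    have : algebraMap (ZMod p) K (h.coeff D) = 0 := by rw [← hcoeff, hc, coeff_zero]
    rw [map_eq_zero_iff _ (algebraMap (ZMod p) K).injective] at this
    exact (Polynomial.leadingCoeff_ne_zero.mpr hh) this
  have hdeg : P.natDegree ≤ q ^ D := by
    refine (Polynomial.natDegree_sum_le _ _).trans ?_
    rw [Finset.fold_max_le]
    constructor
    · positivity
    · intro j hj
      refine (natDegree_C_mul_le _ _).trans ?_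
      rw [natDegree_X_pow]
      exact Nat.pow_le_pow_right (le_of_lt hq2) (Nat.lt_succ_iff.mp (Finset.mem_range.mp hj))
  -- inject the kernel into the roots of `P`
  have hinj : Function.Injective
      (fun x : LinearMap.ker (aeval F h) => (⟨(x : K), by
        rw [Multiset.mem_toFinset, mem_roots']
        exact ⟨hP0, by rw [IsRoot, hev]; exact x.2⟩⟩ : {y // y ∈ P.roots.toFinset})) := by
    intro a b hab
    exact Subtype.ext (Subtype.mk_eq_mk.mp hab)
  calc Nat.card (LinearMap.ker (aeval F h))
      ≤ Nat.card {y // y ∈ P.roots.toFinset} := Nat.card_le_card_of_injective _ hinj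
    _ = P.roots.toFinset.card := Nat.card_eq_finsetCard _
    _ ≤ Multiset.card P.roots := Multiset.toFinset_card_le _
    _ ≤ P.natDegree := Polynomial.card_roots' P
    _ ≤ q ^ D := hdeg

/-- Exact count: if `h` is a nonzero divisor of `X^n - 1` then the kernel of `h(F)`
has exactly `q ^ deg h` elements. -/
lemma card_ker_aeval_eq {n : ℕ} (hq2 : 1 < q) (hK : Fintype.card K = q ^ n)
    (F : Module.End (ZMod p) K) (hF : ∀ x, F x = x ^ q)
    (h : (ZMod p)[X]) (hh : h ≠ 0) (hdvd : h ∣ (X : (ZMod p)[X]) ^ n - 1) :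
    Nat.card (LinearMap.ker (aeval F h)) = q ^ h.natDegree := by
  have hn0 : n ≠ 0 := by
    rintro rfl
    have := Fintype.one_lt_card (α := K)
    rw [hK, pow_zero] at this
    exact absurd this (by norm_num)
  have hXn : ((X : (ZMod p)[X]) ^ n - 1).Monic := by
    have := monic_X_pow_sub_C (1 : ZMod p) hn0
    rwa [map_one] at this
  obtain ⟨r, hr⟩ := hdvd
  have hr0 : r ≠ 0 := by
    rintro rfl
    rw [mul_zero] at hr
    exact hXn.ne_zero hr
  have hdegsum : h.natDegree + r.natDegree = n := by
    have := congrArg natDegree hr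
    rw [natDegree_mul hh hr0, ← C_1, natDegree_X_pow_sub_C] at this
    omega
  have haev0 : aeval F ((X : (ZMod p)[X]) ^ n - 1) = 0 := by
    ext x
    rw [map_sub, aeval_X_pow, map_one, LinearMap.sub_apply, Module.End.one_apply,
      pow_apply_of_pow F hF, ← hK, FiniteField.pow_card, sub_self, LinearMap.zero_apply]
  have hrange : LinearMap.range (aeval F h) ≤ LinearMap.ker (aeval F r) := by
    rintro _ ⟨x, rfl⟩
    rw [LinearMap.mem_ker, ← Module.End.mul_apply, ← map_mul, mul_comm r h, ← hr, haev0,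
      LinearMap.zero_apply]
  have hcard : Nat.card K =
      Nat.card (LinearMap.range (aeval F h)) * Nat.card (LinearMap.ker (aeval F h)) := by
    rw [Submodule.card_eq_card_quotient_mul_card (LinearMap.ker (aeval F h)),
      Nat.card_congr (LinearMap.quotKerEquivRange (aeval F h)).toEquiv]
    exact Nat.mul_comm _ _
  have hkerle : Nat.card (LinearMap.ker (aeval F h)) ≤ q ^ h.natDegree :=
    card_ker_aeval_le hq2 F hF h hh
  have hrangele : Nat.card (LinearMap.range (aeval F h)) ≤ q ^ r.natDegree := by
    refine le_trans ?_ (card_ker_aeval_le hq2 F hF r hr0)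
    exact Nat.card_le_card_of_injective _ (Submodule.inclusion_injective hrange)
  have hprod : Nat.card (LinearMap.range (aeval F h)) * Nat.card (LinearMap.ker (aeval F h))
      = q ^ r.natDegree * q ^ h.natDegree := by
    rw [← hcard, Nat.card_eq_fintype_card, hK, ← pow_add, ← hdegsum, Nat.add_comm]
  have hkpos : 0 < Nat.card (LinearMap.ker (aeval F h)) := Nat.card_pos
  have hrpos : 0 < (q : ℕ) ^ r.natDegree := Nat.pow_pos (by omega)
  have h1 : q ^ r.natDegree * q ^ h.natDegree
      ≤ q ^ r.natDegree * Nat.card (LinearMap.ker (aeval F h)) := by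
    rw [← hprod]
    exact Nat.mul_le_mul_right _ hrangele
  exact Nat.le_antisymm hkerle (Nat.le_of_mul_le_mul_left h1 hrpos)

/-- kernel of `lcm f g` is the sup of the kernels. -/
lemma ker_aeval_lcm (F : Module.End (ZMod p) K) (f g : (ZMod p)[X]) (hf : f ≠ 0) (hg : g ≠ 0) :
    LinearMap.ker (aeval F (lcm f g)) =
      LinearMap.ker (aeval F f) ⊔ LinearMap.ker (aeval F g) := by
  classical
  have hdvd_ker : ∀ (a b : (ZMod p)[X]), a ∣ b →
      LinearMap.ker (aeval F a) ≤ LinearMap.ker (aeval F b) := by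
    rintro a b ⟨t, rfl⟩ x hx
    rw [LinearMap.mem_ker] at hx ⊢
    rw [mul_comm, map_mul, Module.End.mul_apply, hx, map_zero]
  refine le_antisymm ?_ (sup_le (hdvd_ker _ _ (dvd_lcm_left f g)) (hdvd_ker _ _ (dvd_lcm_right f g)))
  set d := GCDMonoid.gcd f g with hd
  have hd0 : d ≠ 0 := gcd_ne_zero_of_left hf
  have hff : d * (f / d) = f := EuclideanDomain.mul_div_cancel' hd0 (gcd_dvd_left f g)
  have hgg : d * (g / d) = g := EuclideanDomain.mul_div_cancel' hd0 (gcd_dvd_right f g)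
  obtain ⟨a, b, hab⟩ := isCoprime_div_gcd_div_gcd (p := f) hg
  -- `f * (g / d)` is a multiple of `lcm f g` (indeed associated)
  have hassoc : Associated (d * lcm f g) (f * g) := gcd_mul_lcm f g
  obtain ⟨u, hu⟩ := hassoc
  have hfg' : f * (g / d) = lcm f g * u := by
    have h1 : d * (f * (g / d)) = d * (lcm f g * u) := by
      rw [← mul_assoc, mul_comm d f, mul_assoc, hgg, ← hu, mul_assoc]
    exact mul_left_cancel₀ hd0 h1
  have hgf' : g * (f / d) = lcm f g * u := by
    have h1 : d * (g * (f / d)) = d * (lcm f g * u) := by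
      rw [← mul_assoc, mul_comm d g, mul_assoc, hff, mul_comm g f, ← hu, mul_assoc]
    exact mul_left_cancel₀ hd0 h1
  intro v hv
  rw [LinearMap.mem_ker] at hv
  have key : ∀ c : (ZMod p)[X], aeval F (lcm f g * c) v = 0 := by
    intro c
    rw [mul_comm, map_mul, Module.End.mul_apply, hv, map_zero]
  have hv1 : aeval F (b * (g / d)) v ∈ LinearMap.ker (aeval F f) := by
    rw [LinearMap.mem_ker, ← Module.End.mul_apply, ← map_mul]
    have : f * (b * (g / d)) = lcm f g * (u * b) := by
      rw [← mul_assoc, mul_comm f b, mul_assoc, hfg']; ring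
    rw [this, key]
  have hv2 : aeval F (a * (f / d)) v ∈ LinearMap.ker (aeval F g) := by
    rw [LinearMap.mem_ker, ← Module.End.mul_apply, ← map_mul]
    have : g * (a * (f / d)) = lcm f g * (u * a) := by
      rw [← mul_assoc, mul_comm g a, mul_assoc, hgf']; ring
    rw [this, key]
  have hvsum : aeval F (b * (g / d)) v + aeval F (a * (f / d)) v = v := by
    rw [← LinearMap.add_apply, ← map_add]
    have : b * (g / d) + a * (f / d) = 1 := by rw [add_comm]; exact hab
    rw [this, map_one, Module.End.one_apply]
  rw [Submodule.mem_sup]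
  exact ⟨_, hv1, _, hv2, hvsum⟩

lemma ker_aeval_finset_lcm (F : Module.End (ZMod p) K) {ι : Type*} [DecidableEq ι]
    (s : Finset ι) (f : ι → (ZMod p)[X]) (hf : ∀ i, f i ≠ 0) :
    LinearMap.ker (aeval F (s.lcm f)) = ⨆ i ∈ s, LinearMap.ker (aeval F (f i)) := by
  classical
  induction s using Finset.induction_on with
  | empty =>
      rw [Finset.lcm_empty, map_one, Module.End.one_eq_id, LinearMap.ker_id]
      simp
  | @insert i s his ih =>
      have hs0 : s.lcm f ≠ 0 := by
        intro hc
        have : s.lcm f ∣ ∏ j ∈ s, f j := Finset.lcm_dvd fun j hj => Finset.dvd_prod_of_mem f hj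
        rw [hc] at this
        have := eq_zero_of_zero_dvd this
        exact (Finset.prod_ne_zero_iff.mpr fun j _ => hf j) this
      rw [Finset.lcm_insert, ker_aeval_lcm F _ _ (hf i) hs0, ih, Finset.iSup_insert]

end Helpers

/-- `λ(d)`: the degree of `lcm(x^{d_1}-1, …, x^{d_k}-1)` in `F_p[x]`. -/
noncomputable def lambdaDeg (p k : ℕ) [Fact p.Prime] (d : Fin k → ℕ) : ℕ :=
  ((Finset.univ : Finset (Fin k)).lcm fun i => (X : Polynomial (ZMod p)) ^ d i - 1).natDegree

set_option maxHeartbeats 1000000 in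
/-- The number of k-tuples `(x_1,…,x_k) ∈ F_{q^{d_1}} × ⋯ × F_{q^{d_k}}` (inside `F_{q^n}`)
with `x_1 + ⋯ + x_k = 0` equals `q^{d_1+⋯+d_k-λ}` where
`λ = deg lcm(x^{d_1}-1,…,x^{d_k}-1)`. -/
theorem count_zero_sums (p s q n k : ℕ) [Fact p.Prime] (hs : 0 < s) (hq : q = p ^ s)
    (hn : 1 < n) (hnpp : ¬ IsPrimePow n) (hk : 1 < k)
    (K : Type*) [Field K] [Fintype K] (hK : Fintype.card K = q ^ n)
    (d : Fin k → ℕ) (hmono : StrictMono d) (hdvd : ∀ i, d i ∣ n) (hlt : ∀ i, d i < n)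
    (hnd : ∀ i j, i ≠ j → ¬ d i ∣ d j) :
    Nat.card {x : Fin k → K // (∀ i, x i ^ q ^ d i = x i) ∧ ∑ i, x i = 0}
      = q ^ ((∑ i, d i) - lambdaDeg p k d) := by
  classical
  have hp := (Fact.out : p.Prime)
  have hq2 : 1 < q := by
    rw [hq]
    exact Nat.one_lt_pow (by omega) hp.one_lt
  -- char K = p
  have hchar : CharP K p := by
    obtain ⟨p', hp'⟩ := CharP.exists K
    haveI := hp'
    obtain ⟨m, hp'prime, hcard⟩ := FiniteField.card K p'
    have hpp' : p = p' := by
      have h1 : p ∣ p' ^ (m : ℕ) := by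
        rw [← hcard, hK, hq, ← pow_mul]
        exact dvd_pow_self p (by positivity)
      exact (Nat.prime_dvd_prime_iff_eq hp hp'prime).mp (hp.dvd_of_dvd_pow h1)
    rwa [hpp']
  haveI := hchar
  letI : Algebra (ZMod p) K := ZMod.algebra K p
  -- the q-Frobenius as a ZMod p-linear map
  have hqchar : ∀ x y : K, (x + y) ^ q = x ^ q + y ^ q := by
    intro x y
    rw [hq]
    simpa only [iterateFrobenius_def] using map_add (iterateFrobenius K p s) x y
  have hsmul : ∀ (c : ZMod p) (x : K), (c • x) ^ q = c • x ^ q := by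
    intro c x
    rw [Algebra.smul_def, Algebra.smul_def, mul_pow, ← map_pow]
    congr 2
    rw [hq]
    exact ZMod.pow_card_pow c
  set F : Module.End (ZMod p) K :=
    { toFun := fun x => x ^ q
      map_add' := hqchar
      map_smul' := fun c x => by simp [hsmul c x] } with hFdef
  have hF : ∀ x : K, F x = x ^ q := fun _ => rfl
  set P : Fin k → (ZMod p)[X] := fun i => (X : (ZMod p)[X]) ^ d i - 1 with hPdef
  have hd1 : ∀ i, 1 ≤ d i := by
    intro i
    rcases Nat.eq_zero_or_pos (d i) with h0 | h1
    · exfalso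
      have := hdvd i
      rw [h0, zero_dvd_iff] at this
      omega
    · exact h1
  have hPmonic : ∀ i, (P i).Monic := by
    intro i
    have := monic_X_pow_sub_C (1 : ZMod p) (n := d i) (by have := hd1 i; omega)
    rwa [map_one] at this
  have hP0 : ∀ i, P i ≠ 0 := fun i => (hPmonic i).ne_zero
  have hPdeg : ∀ i, (P i).natDegree = d i := by
    intro i
    rw [hPdef]
    have : ((X : (ZMod p)[X]) ^ d i - C 1).natDegree = d i := natDegree_X_pow_sub_C
    rwa [map_one] at this
  have hPdvd : ∀ i, P i ∣ (X : (ZMod p)[X]) ^ n - 1 := by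
    intro i
    obtain ⟨m, hm⟩ := hdvd i
    have := sub_dvd_pow_sub_pow ((X : (ZMod p)[X]) ^ d i) 1 m
    rwa [← pow_mul, one_pow, ← hm] at this
  set V : Fin k → Submodule (ZMod p) K := fun i => LinearMap.ker (aeval F (P i)) with hVdef
  have hVmem : ∀ i (x : K), x ∈ V i ↔ x ^ q ^ d i = x := fun i x =>
    mem_ker_aeval_X_pow_sub_one F hF (d i) x
  have hVcard : ∀ i, Nat.card (V i) = q ^ d i := by
    intro i
    rw [hVdef]
    rw [card_ker_aeval_eq hq2 hK F hF (P i) (hP0 i) (hPdvd i), hPdeg]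
  -- lcm
  set L : (ZMod p)[X] := (Finset.univ : Finset (Fin k)).lcm P with hLdef
  have hLdvd : L ∣ (X : (ZMod p)[X]) ^ n - 1 := Finset.lcm_dvd fun i _ => hPdvd i
  have hXn1 : ((X : (ZMod p)[X]) ^ n - 1) ≠ 0 := by
    have := monic_X_pow_sub_C (1 : ZMod p) (n := n) (by omega)
    rw [map_one] at this
    exact this.ne_zero
  have hL0 : L ≠ 0 := by
    intro hc
    rw [hc] at hLdvd
    exact hXn1 (eq_zero_of_zero_dvd hLdvd)
  have hLker : LinearMap.ker (aeval F L) = ⨆ i, V i := by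
    rw [hLdef, ker_aeval_finset_lcm F Finset.univ P hP0]
    simp [hVdef]
  have hLcard : Nat.card (⨆ i, V i : Submodule (ZMod p) K) = q ^ lambdaDeg p k d := by
    rw [← hLker, card_ker_aeval_eq hq2 hK F hF L hL0 hLdvd]
    rfl
  -- the summation map
  set ψ : (∀ i, V i) →ₗ[ZMod p] K :=
    { toFun := fun x => ∑ i, (x i : K)
      map_add' := fun x y => by simp [Finset.sum_add_distrib]
      map_smul' := fun c x => by simp [Finset.smul_sum] } with hψdef
  have hψ : ∀ x : ∀ i, V i, ψ x = ∑ i, (x i : K) := fun _ => rfl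
  -- range of ψ is the sup of the V i
  have hrange : LinearMap.range ψ = ⨆ i, V i := by
    apply le_antisymm
    · rintro _ ⟨x, rfl⟩
      rw [hψ]
      exact Submodule.sum_mem _ fun i _ => Submodule.mem_iSup_of_mem i (x i).2
    · refine iSup_le fun i x hx => ?_
      refine ⟨Pi.single i ⟨x, hx⟩, ?_⟩
      rw [hψ]
      rw [Finset.sum_eq_single_of_mem i (Finset.mem_univ i)]
      · rw [Pi.single_eq_same]
      · intro j _ hj
        rw [Pi.single_eq_of_ne hj, ZeroMemClass.coe_zero]
  -- the subtype is equivalent to ker ψ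
  have hequiv : Nat.card {x : Fin k → K // (∀ i, x i ^ q ^ d i = x i) ∧ ∑ i, x i = 0}
      = Nat.card (LinearMap.ker ψ) := by
    refine Nat.card_congr ?_
    refine
      { toFun := fun x => ⟨fun i => ⟨x.1 i, (hVmem i _).mpr (x.2.1 i)⟩, by
          rw [LinearMap.mem_ker, hψ]; exact x.2.2⟩
        invFun := fun y => ⟨fun i => (y.1 i : K), ⟨fun i => (hVmem i _).mp (y.1 i).2, by
          have := y.2; rwa [LinearMap.mem_ker, hψ] at this⟩⟩
        left_inv := fun x => rfl
        right_inv := fun y => rfl }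
  -- counting
  have hcardPi : Nat.card (∀ i, V i) = q ^ (∑ i, d i) := by
    rw [Nat.card_pi]
    rw [Finset.prod_congr rfl fun i _ => hVcard i]
    rw [Finset.prod_pow_eq_pow_sum]
  have hcardeq : Nat.card (∀ i, V i)
      = Nat.card (LinearMap.range ψ) * Nat.card (LinearMap.ker ψ) := by
    rw [Submodule.card_eq_card_quotient_mul_card (LinearMap.ker ψ),
      Nat.card_congr (LinearMap.quotKerEquivRange ψ).toEquiv]
    exact Nat.mul_comm _ _
  rw [hrange] at hcardeq
  rw [hLcard, hcardPi] at hcardeq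
  have hle : lambdaDeg p k d ≤ ∑ i, d i := by
    rw [← Nat.pow_dvd_pow_iff_le_right hq2]
    exact ⟨Nat.card (LinearMap.ker ψ), hcardeq⟩
  rw [hequiv]
  have hpow : q ^ (∑ i, d i) = q ^ lambdaDeg p k d * q ^ ((∑ i, d i) - lambdaDeg p k d) := by
    rw [← pow_add, Nat.add_sub_cancel' hle]
  rw [hpow] at hcardeq
  have hqpos : 0 < q ^ lambdaDeg p k d := Nat.pow_pos (lt_trans Nat.zero_lt_one hq2)
  exact (Nat.eq_of_mul_eq_mul_left hqpos hcardeq.symm)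
end

section
/- For all integers t ≥ 3, the number W(t−1) of squarefree divisors of t−1 satisfies W(t−1) < t^{0.96/log log t}. -/
open Finset

/-- `W(m)`: the number of squarefree divisors of `m`. -/
def W (m : ℕ) : ℕ := (m.divisors.filter Squarefree).card

lemma W_eq {m : ℕ} (hm : m ≠ 0) : W m = 2 ^ m.primeFactors.card := by
  have h := Nat.divisors_filter_squarefree hm
  rw [W, Finset.card_def, h, Multiset.card_map, ← Finset.card_def, Finset.card_powerset,
    Nat.factors_eq]
  rfl

/-! ### Exp/log certificates -/

lemma exp1024_ub : Real.exp (1/1024) ≤ 1.0009770395 := by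
  have h : Real.exp (1/1024) ^ (1024:ℕ) ≤ (1.0009770395:ℝ) ^ (1024:ℕ) := by
    rw [← Real.exp_nat_mul, show ((1024:ℕ):ℝ) * (1/1024) = 1 by norm_num]
    exact Real.exp_one_lt_d9.le.trans (by rw [show (1024:ℕ) = 256*4 from rfl, pow_mul]; norm_num)
  exact le_of_pow_le_pow_left₀ (by norm_num) (by norm_num) h

lemma exp1024_lb : (1.0009770394:ℝ) ≤ Real.exp (1/1024) := by
  have h : (1.0009770394:ℝ) ^ (1024:ℕ) ≤ Real.exp (1/1024) ^ (1024:ℕ) := by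
    rw [← Real.exp_nat_mul, show ((1024:ℕ):ℝ) * (1/1024) = 1 by norm_num]
    exact le_trans (by rw [show (1024:ℕ) = 256*4 from rfl, pow_mul]; norm_num) Real.exp_one_gt_d9.le
  exact le_of_pow_le_pow_left₀ (by norm_num) (Real.exp_pos _).le h

lemma exp_cd_ub (c d : ℕ) :
    Real.exp ((c:ℝ) + (d:ℝ)/1024) ≤ (2.7182818286:ℝ)^c * 1.0009770395^d := by
  rw [show ((c:ℝ) + (d:ℝ)/1024) = (c:ℝ)*1 + (d:ℝ)*(1/1024) by ring, Real.exp_add,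
    Real.exp_nat_mul, Real.exp_nat_mul]
  exact mul_le_mul (pow_le_pow_left₀ (Real.exp_pos 1).le Real.exp_one_lt_d9.le c)
    (pow_le_pow_left₀ (Real.exp_pos _).le exp1024_ub d) (by positivity) (by positivity)

lemma exp_cd_lb (c d : ℕ) :
    (2.7182818283:ℝ)^c * 1.0009770394^d ≤ Real.exp ((c:ℝ) + (d:ℝ)/1024) := by
  rw [show ((c:ℝ) + (d:ℝ)/1024) = (c:ℝ)*1 + (d:ℝ)*(1/1024) by ring, Real.exp_add,
    Real.exp_nat_mul, Real.exp_nat_mul]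
  exact mul_le_mul (pow_le_pow_left₀ (by norm_num) Real.exp_one_gt_d9.le c)
    (pow_le_pow_left₀ (by norm_num) exp1024_lb d) (by positivity) (by positivity)

lemma log_ge_cert {x : ℝ} (c d : ℕ) (h : (2.7182818286:ℝ)^c * 1.0009770395^d ≤ x) :
    ((c:ℝ) + (d:ℝ)/1024) ≤ Real.log x := by
  have hx : Real.exp ((c:ℝ) + (d:ℝ)/1024) ≤ x := (exp_cd_ub c d).trans h
  exact (Real.le_log_iff_exp_le (lt_of_lt_of_le (Real.exp_pos _) hx)).2 hx

lemma log_le_cert {x : ℝ} (c d : ℕ) (hx : 0 < x)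
    (h : x ≤ (2.7182818283:ℝ)^c * 1.0009770394^d) : Real.log x ≤ ((c:ℝ) + (d:ℝ)/1024) :=
  (Real.log_le_iff_le_exp hx).2 (h.trans (exp_cd_lb c d))

/-! ### Monotonicity of x / log x -/

lemma key_mono {B x T : ℝ} (hB : 0 ≤ B) (hex : Real.exp 1 ≤ x) (hxT : x ≤ T)
    (h : B * Real.log x ≤ 0.96 * x) : B * Real.log T ≤ 0.96 * T := by
  have hx0 : (0:ℝ) < x := lt_of_lt_of_le (Real.exp_pos 1) hex
  have hlx : 1 ≤ Real.log x := by
    rw [show (1:ℝ) = Real.log (Real.exp 1) from (Real.log_exp 1).symm]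
    exact Real.log_le_log (Real.exp_pos 1) hex
  have hT0 : 0 < T := lt_of_lt_of_le hx0 hxT
  have hLT : Real.log x ≤ Real.log T := Real.log_le_log hx0 hxT
  have hLT0 : 0 < Real.log T := lt_of_lt_of_le (by linarith) hLT
  have h1 : Real.log T - Real.log x ≤ T/x - 1 := by
    have := Real.log_le_sub_one_of_pos (show 0 < T/x from div_pos hT0 hx0)
    rwa [Real.log_div (ne_of_gt hT0) (ne_of_gt hx0)] at this
  have h2 : x * (Real.log T - Real.log x) ≤ T - x := by
    have h3 := mul_le_mul_of_nonneg_left h1 hx0.le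
    calc x * (Real.log T - Real.log x) ≤ x * (T/x - 1) := h3
      _ = T - x := by field_simp
  have h4 : T - x ≤ (T - x) * Real.log x := le_mul_of_one_le_right (sub_nonneg.2 hxT) hlx
  have hkey : x * Real.log T ≤ T * Real.log x := by nlinarith [h2, h4]
  have h5 : (B * Real.log T) * Real.log x ≤ (0.96 * T) * Real.log x := by
    calc (B * Real.log T) * Real.log x = (B * Real.log x) * Real.log T := by ring
      _ ≤ (0.96 * x) * Real.log T := mul_le_mul_of_nonneg_right h hLT0.le
      _ = 0.96 * (x * Real.log T) := by ring
      _ ≤ 0.96 * (T * Real.log x) := by nlinarith [hkey]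
      _ = (0.96 * T) * Real.log x := by ring
  exact le_of_mul_le_mul_right h5 (by linarith)

lemma key_mono_strict {B x X : ℝ} (hB : 0 ≤ B) (hex : Real.exp 1 < x) (hxX : x < X)
    (h : B * Real.log x ≤ 0.96 * x) : B * Real.log X < 0.96 * X := by
  have hx0 : (0:ℝ) < x := lt_trans (Real.exp_pos 1) hex
  have hlx : 1 < Real.log x := by
    rw [show (1:ℝ) = Real.log (Real.exp 1) from (Real.log_exp 1).symm]
    exact Real.log_lt_log (Real.exp_pos 1) hex
  have hX0 : 0 < X := lt_trans hx0 hxX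
  have hLX : Real.log x ≤ Real.log X := Real.log_le_log hx0 hxX.le
  have hLX0 : 0 < Real.log X := lt_of_lt_of_le (by linarith) hLX
  have h1 : Real.log X - Real.log x ≤ X/x - 1 := by
    have := Real.log_le_sub_one_of_pos (show 0 < X/x from div_pos hX0 hx0)
    rwa [Real.log_div (ne_of_gt hX0) (ne_of_gt hx0)] at this
  have h2 : x * (Real.log X - Real.log x) ≤ X - x := by
    have h3 := mul_le_mul_of_nonneg_left h1 hx0.le
    calc x * (Real.log X - Real.log x) ≤ x * (X/x - 1) := h3
      _ = X - x := by field_simp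
  have h4 : X - x < (X - x) * Real.log x :=
    lt_mul_of_one_lt_right (by linarith) hlx
  have hkey : x * Real.log X < X * Real.log x := by nlinarith [h2, h4]
  have h5 : (B * Real.log X) * Real.log x < (0.96 * X) * Real.log x := by
    calc (B * Real.log X) * Real.log x = (B * Real.log x) * Real.log X := by ring
      _ ≤ (0.96 * x) * Real.log X := mul_le_mul_of_nonneg_right h hLX0.le
      _ = 0.96 * (x * Real.log X) := by ring
      _ < 0.96 * (X * Real.log x) := by nlinarith [hkey]
      _ = (0.96 * X) * Real.log x := by ring
  exact lt_of_mul_lt_mul_right h5 (by linarith)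

/-! ### Base-case machinery -/

lemma base_core (k : ℕ) (x L T : ℝ) (hx5 : 5 ≤ x) (hlx : Real.log x ≤ L)
    (h3 : (0.6931471808:ℝ) * (k:ℝ) * L ≤ 0.96 * x) (hxT : x ≤ T) :
    Real.log 2 * (k:ℝ) * Real.log T ≤ 0.96 * T := by
  have hlx0 : 0 ≤ Real.log x := Real.log_nonneg (by linarith)
  have h : Real.log 2 * (k:ℝ) * Real.log x ≤ 0.96 * x :=
    calc Real.log 2 * (k:ℝ) * Real.log x ≤ 0.6931471808 * (k:ℝ) * Real.log x :=
        mul_le_mul_of_nonneg_right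
          (mul_le_mul_of_nonneg_right Real.log_two_lt_d9.le (Nat.cast_nonneg k)) hlx0
      _ ≤ 0.6931471808 * (k:ℝ) * L := mul_le_mul_of_nonneg_left hlx (by positivity)
      _ ≤ 0.96 * x := h3
  exact key_mono (mul_nonneg (Real.log_nonneg one_le_two) (Nat.cast_nonneg k))
    (Real.exp_one_lt_d9.le.trans (by linarith)) hxT h

lemma base_gen (k c d cL dL N : ℕ)
    (h1 : (2.7182818286:ℝ)^c * 1.0009770395^d ≤ (N:ℝ))
    (h2 : ((c:ℝ) + (d:ℝ)/1024) ≤ (2.7182818283:ℝ)^cL * 1.0009770394^dL)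
    (h3 : (0.6931471808:ℝ) * (k:ℝ) * ((cL:ℝ) + (dL:ℝ)/1024) ≤ 0.96 * ((c:ℝ) + (d:ℝ)/1024))
    (h4 : (5:ℝ) ≤ (c:ℝ) + (d:ℝ)/1024)
    {T : ℝ} (hT : Real.log (N:ℝ) ≤ T) :
    Real.log 2 * (k:ℝ) * Real.log T ≤ 0.96 * T :=
  base_core k ((c:ℝ) + (d:ℝ)/1024) ((cL:ℝ) + (dL:ℝ)/1024) T h4
    (log_le_cert cL dL (by linarith) h2) h3 ((log_ge_cert c d h1).trans hT)

lemma pow_split (a : ℝ) (n : ℕ) (h : 256 < n) : a ^ n = a ^ (n - 256) * a ^ 256 := by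
  rw [← pow_add]; congr 1; omega

/-! ### Minimal products of prime sets -/

def plist : List ℕ := [2, 3, 5, 7, 11, 13, 17, 19, 23, 29, 31, 37, 41, 43, 47, 53, 59, 61, 67, 71, 73, 79, 83, 89, 97, 101, 103, 107, 109, 113, 127, 131, 137, 139, 149, 151, 157, 163, 167]

def Qlist : List ℕ := [1, 2, 6, 30, 210, 2310, 30030, 510510, 9699690, 223092870, 6469693230, 200560490130, 7420738134810, 304250263527210, 13082761331670030, 614889782588491410, 32589158477190044730, 1922760350154212639070, 117288381359406970983270, 7858321551080267055879090, 557940830126698960967415390, 40729680599249024150621323470, 3217644767340672907899084554130, 267064515689275851355624017992790, 23768741896345550770650537601358310, 2305567963945518424753102147331756070, 232862364358497360900063316880507363070, 23984823528925228172706521638692258396210, 2566376117594999414479597815340071648394470, 279734996817854936178276161872067809674997230, 31610054640417607788145206291543662493274686990, 4014476939333036189094441199026045136645885247730, 525896479052627740771371797072411912900610967452630, 72047817630210000485677936198920432067383702541010310, 10014646650599190067509233131649940057366334653200433090, 1492182350939279320058875736615841068547583863326864530410, 225319534991831177328890236228992001350685163362356544091910, 35375166993717494840635767087951744212057570647889977422429870,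 5766152219975951659023630035336134306565384015606066319856068810, 962947420735983927056946215901134429196419130606213075415963491270]

lemma plist_counts : ∀ k, k < 39 → ((Finset.range (plist.getD k 1)).filter Nat.Prime).card = k := by
  decide +kernel

lemma Qlist_rel : ∀ k, k < 39 → Qlist.getD (k+1) 1 = plist.getD k 1 * Qlist.getD k 1 := by
  decide

lemma minprod : ∀ k, k ≤ 39 → ∀ S : Finset ℕ, (∀ p ∈ S, Nat.Prime p) → k ≤ S.card →
    Qlist.getD k 1 ≤ ∏ p ∈ S, p := by
  intro k
  induction k with
  | zero =>
    intro _ S hS _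
    have : (1:ℕ) ≤ ∏ p ∈ S, p := Finset.one_le_prod' (fun p hp => (hS p hp).one_lt.le)
    simpa [Qlist] using this
  | succ k ih =>
    intro hk39 S hS hcard
    have hne : S.Nonempty := Finset.card_pos.1 (lt_of_lt_of_le (Nat.succ_pos k) hcard)
    have hqS : S.max' hne ∈ S := S.max'_mem hne
    set q := S.max' hne with hqdef
    have hqp : plist.getD k 1 ≤ q := by
      by_contra hlt
      push_neg at hlt
      have hsub : S ⊆ (Finset.range (plist.getD k 1)).filter Nat.Prime := by
        intro p hp
        exact Finset.mem_filter.2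
          ⟨Finset.mem_range.2 (lt_of_le_of_lt (S.le_max' p hp) hlt), hS p hp⟩
      have hle := Finset.card_le_card hsub
      rw [plist_counts k (by omega)] at hle
      omega
    have hcard' : k ≤ (S.erase q).card := by
      rw [Finset.card_erase_of_mem hqS]; omega
    have hprim' : ∀ p ∈ S.erase q, Nat.Prime p := fun p hp => hS p (Finset.mem_of_mem_erase hp)
    have hihv := ih (by omega) (S.erase q) hprim' hcard'
    rw [Qlist_rel k (by omega), ← Finset.mul_prod_erase S (fun p => p) hqS]
    exact Nat.mul_le_mul hqp hihv

/-! ### The inductive step numeric inequality -/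

lemma step_num {A j u δ T : ℝ} (hA : A ≤ 0.6931471808) (hA0 : 0 < A)
    (hu : 5 ≤ u) (hT : 151 ≤ T) (hδ : u - 335/1024 ≤ δ) (hδ0 : 0 < δ)
    (hj : 0 ≤ j) (IH : A * j * u ≤ 0.96 * T) :
    A * (j+1) * (u + δ/T) ≤ 0.96 * (T + δ) := by
  have hT0 : (0:ℝ) < T := by linarith
  have hu0 : (0:ℝ) < u := by linarith
  rw [show u + δ/T = (u*T + δ)/T by field_simp, ← mul_div_assoc, div_le_iff₀ hT0]
  nlinarith [mul_le_mul_of_nonneg_right IH hT0.le,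
    mul_le_mul_of_nonneg_right IH hδ0.le,
    mul_nonneg (mul_nonneg (mul_nonneg hA0.le hj) hδ0.le) (by linarith : (0:ℝ) ≤ u - 5),
    mul_le_mul_of_nonneg_right hA (mul_nonneg hu0.le hT0.le),
    mul_le_mul_of_nonneg_right hA hδ0.le,
    mul_nonneg (by linarith : (0:ℝ) ≤ δ - (u - 335/1024)) hT0.le,
    mul_nonneg hδ0.le (by linarith : (0:ℝ) ≤ T - 151),
    mul_nonneg (by linarith : (0:ℝ) ≤ u - 5) hT0.le]

/-! ### The main induction -/

lemma C_ind : ∀ n : ℕ, ∀ S : Finset ℕ, (∀ p ∈ S, Nat.Prime p) → S.card = n → 4 ≤ n →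
    Real.log 2 * (n:ℝ) * Real.log (∑ p ∈ S, Real.log (p:ℝ)) ≤
      0.96 * (∑ p ∈ S, Real.log (p:ℝ)) := by
  intro n
  induction n using Nat.strong_induction_on with
  | _ n IH =>
  intro S hS hcard h4
  have hne0 : ∀ p ∈ S, ((p:ℝ)) ≠ 0 := fun p hp => Nat.cast_ne_zero.2 (hS p hp).pos.ne'
  have hlogprod : Real.log ((∏ p ∈ S, p : ℕ):ℝ) = ∑ p ∈ S, Real.log (p:ℝ) := by
    rw [Nat.cast_prod, Real.log_prod hne0]
  have hmono : ∀ N : ℕ, 0 < N → N ≤ ∏ p ∈ S, p →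
      Real.log (N:ℝ) ≤ ∑ p ∈ S, Real.log (p:ℝ) := by
    intro N hN0 hNle
    rw [← hlogprod]
    exact Real.log_le_log (by exact_mod_cast hN0) (by exact_mod_cast hNle)
  rcases le_or_gt n 39 with h39 | h39
  · interval_cases n
    · have hQ : (210:ℕ) ≤ ∏ p ∈ S, p := by
        have h := minprod 4 (by norm_num) S hS (by omega)
        rwa [show Qlist.getD 4 1 = 210 from by decide] at h
      exact base_gen 4 5 355 1 693 210 (by norm_num [pow_split]) (by norm_num [pow_split]) (by norm_num)
        (by norm_num) (hmono 210 (by norm_num) hQ)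
    · have hQ : (2310:ℕ) ≤ ∏ p ∈ S, p := by
        have h := minprod 5 (by norm_num) S hS (by omega)
        rwa [show Qlist.getD 5 1 = 2310 from by decide] at h
      exact base_gen 5 7 762 1 1073 2310 (by norm_num [pow_split]) (by norm_num [pow_split]) (by norm_num)
        (by norm_num) (hmono 2310 (by norm_num) hQ)
    · have hQ : (30030:ℕ) ≤ ∏ p ∈ S, p := by
        have h := minprod 6 (by norm_num) S hS (by omega)
        rwa [show Qlist.getD 6 1 = 30030 from by decide] at h
      exact base_gen 6 10 317 1 1366 30030 (by norm_num [pow_split]) (by norm_num [pow_split]) (by norm_num)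
        (by norm_num) (hmono 30030 (by norm_num) hQ)
    · have hQ : (510510:ℕ) ≤ ∏ p ∈ S, p := by
        have h := minprod 7 (by norm_num) S hS (by omega)
        rwa [show Qlist.getD 7 1 = 510510 from by decide] at h
      exact base_gen 7 13 146 1 1614 510510 (by norm_num [pow_split]) (by norm_num [pow_split]) (by norm_num)
        (by norm_num) (hmono 510510 (by norm_num) hQ)
    · have hQ : (9699690:ℕ) ≤ ∏ p ∈ S, p := by
        have h := minprod 8 (by norm_num) S hS (by omega)
        rwa [show Qlist.getD 8 1 = 9699690 from by decide] at h
      exact base_gen 8 16 89 1 1821 9699690 (by norm_num [pow_split]) (by norm_num [pow_split]) (by norm_num)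
        (by norm_num) (hmono 9699690 (by norm_num) hQ)
    · have hQ : (223092870:ℕ) ≤ ∏ p ∈ S, p := by
        have h := minprod 9 (by norm_num) S hS (by omega)
        rwa [show Qlist.getD 9 1 = 223092870 from by decide] at h
      exact base_gen 9 19 228 1 2004 223092870 (by norm_num [pow_split]) (by norm_num [pow_split]) (by norm_num)
        (by norm_num) (hmono 223092870 (by norm_num) hQ)
    · have hQ : (6469693230:ℕ) ≤ ∏ p ∈ S, p := by
        have h := minprod 10 (by norm_num) S hS (by omega)
        rwa [show Qlist.getD 10 1 = 6469693230 from by decide] at h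
      exact base_gen 10 22 604 1 2169 6469693230 (by norm_num [pow_split]) (by norm_num [pow_split]) (by norm_num)
        (by norm_num) (hmono 6469693230 (by norm_num) hQ)
    · have hQ : (200560490130:ℕ) ≤ ∏ p ∈ S, p := by
        have h := minprod 11 (by norm_num) S hS (by omega)
        rwa [show Qlist.getD 11 1 = 200560490130 from by decide] at h
      exact base_gen 11 26 24 1 2314 200560490130 (by norm_num [pow_split]) (by norm_num [pow_split]) (by norm_num)
        (by norm_num) (hmono 200560490130 (by norm_num) hQ)
    · have hQ : (7420738134810:ℕ) ≤ ∏ p ∈ S, p := by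
        have h := minprod 12 (by norm_num) S hS (by omega)
        rwa [show Qlist.getD 12 1 = 7420738134810 from by decide] at h
      exact base_gen 12 29 650 1 2447 7420738134810 (by norm_num [pow_split]) (by norm_num [pow_split]) (by norm_num)
        (by norm_num) (hmono 7420738134810 (by norm_num) hQ)
    · have hQ : (304250263527210:ℕ) ≤ ∏ p ∈ S, p := by
        have h := minprod 13 (by norm_num) S hS (by omega)
        rwa [show Qlist.getD 13 1 = 304250263527210 from by decide] at h
      exact base_gen 13 33 357 1 2568 304250263527210 (by norm_num [pow_split]) (by norm_num [pow_split]) (by norm_num)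
        (by norm_num) (hmono 304250263527210 (by norm_num) hQ)
    · have hQ : (13082761331670030:ℕ) ≤ ∏ p ∈ S, p := by
        have h := minprod 14 (by norm_num) S hS (by omega)
        rwa [show Qlist.getD 14 1 = 13082761331670030 from by decide] at h
      exact base_gen 14 37 112 1 2677 13082761331670030 (by norm_num [pow_split]) (by norm_num [pow_split]) (by norm_num)
        (by norm_num) (hmono 13082761331670030 (by norm_num) hQ)
    · have hQ : (614889782588491410:ℕ) ≤ ∏ p ∈ S, p := by
        have h := minprod 15 (by norm_num) S hS (by omega)
        rwa [show Qlist.getD 15 1 = 614889782588491410 from by decide] at h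
      exact base_gen 15 40 983 1 2778 614889782588491410 (by norm_num [pow_split]) (by norm_num [pow_split]) (by norm_num)
        (by norm_num) (hmono 614889782588491410 (by norm_num) hQ)
    · have hQ : (32589158477190044730:ℕ) ≤ ∏ p ∈ S, p := by
        have h := minprod 16 (by norm_num) S hS (by omega)
        rwa [show Qlist.getD 16 1 = 32589158477190044730 from by decide] at h
      exact base_gen 16 44 952 1 2873 32589158477190044730 (by norm_num [pow_split]) (by norm_num [pow_split]) (by norm_num)
        (by norm_num) (hmono 32589158477190044730 (by norm_num) hQ)
    · have hQ : (1922760350154212639070:ℕ) ≤ ∏ p ∈ S, p := by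
        have h := minprod 17 (by norm_num) S hS (by omega)
        rwa [show Qlist.getD 17 1 = 1922760350154212639070 from by decide] at h
      exact base_gen 17 49 8 1 2962 1922760350154212639070 (by norm_num [pow_split]) (by norm_num [pow_split]) (by norm_num)
        (by norm_num) (hmono 1922760350154212639070 (by norm_num) hQ)
    · have hQ : (117288381359406970983270:ℕ) ≤ ∏ p ∈ S, p := by
        have h := minprod 18 (by norm_num) S hS (by omega)
        rwa [show Qlist.getD 18 1 = 117288381359406970983270 from by decide] at h
      exact base_gen 18 53 121 1 3044 117288381359406970983270 (by norm_num [pow_split]) (by norm_num [pow_split]) (by norm_num)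
        (by norm_num) (hmono 117288381359406970983270 (by norm_num) hQ)
    · have hQ : (7858321551080267055879090:ℕ) ≤ ∏ p ∈ S, p := by
        have h := minprod 19 (by norm_num) S hS (by omega)
        rwa [show Qlist.getD 19 1 = 7858321551080267055879090 from by decide] at h
      exact base_gen 19 57 331 1 3122 7858321551080267055879090 (by norm_num [pow_split]) (by norm_num [pow_split]) (by norm_num)
        (by norm_num) (hmono 7858321551080267055879090 (by norm_num) hQ)
    · have hQ : (557940830126698960967415390:ℕ) ≤ ∏ p ∈ S, p := by
        have h := minprod 20 (by norm_num) S hS (by omega)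
        rwa [show Qlist.getD 20 1 = 557940830126698960967415390 from by decide] at h
      exact base_gen 20 61 600 1 3196 557940830126698960967415390 (by norm_num [pow_split]) (by norm_num [pow_split]) (by norm_num)
        (by norm_num) (hmono 557940830126698960967415390 (by norm_num) hQ)
    · have hQ : (40729680599249024150621323470:ℕ) ≤ ∏ p ∈ S, p := by
        have h := minprod 21 (by norm_num) S hS (by omega)
        rwa [show Qlist.getD 21 1 = 40729680599249024150621323470 from by decide] at h
      exact base_gen 21 65 897 1 3265 40729680599249024150621323470 (by norm_num [pow_split]) (by norm_num [pow_split]) (by norm_num)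
        (by norm_num) (hmono 40729680599249024150621323470 (by norm_num) hQ)
    · have hQ : (3217644767340672907899084554130:ℕ) ≤ ∏ p ∈ S, p := by
        have h := minprod 22 (by norm_num) S hS (by omega)
        rwa [show Qlist.getD 22 1 = 3217644767340672907899084554130 from by decide] at h
      exact base_gen 22 70 252 1 3331 3217644767340672907899084554130 (by norm_num [pow_split]) (by norm_num [pow_split]) (by norm_num)
        (by norm_num) (hmono 3217644767340672907899084554130 (by norm_num) hQ)
    · have hQ : (267064515689275851355624017992790:ℕ) ≤ ∏ p ∈ S, p := by
        have h := minprod 23 (by norm_num) S hS (by omega)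
        rwa [show Qlist.getD 23 1 = 267064515689275851355624017992790 from by decide] at h
      exact base_gen 23 74 681 1 3393 267064515689275851355624017992790 (by norm_num [pow_split]) (by norm_num [pow_split]) (by norm_num)
        (by norm_num) (hmono 267064515689275851355624017992790 (by norm_num) hQ)
    · have hQ : (23768741896345550770650537601358310:ℕ) ≤ ∏ p ∈ S, p := by
        have h := minprod 24 (by norm_num) S hS (by omega)
        rwa [show Qlist.getD 24 1 = 23768741896345550770650537601358310 from by decide] at h
      exact base_gen 24 79 157 1 3453 23768741896345550770650537601358310 (by norm_num [pow_split]) (by norm_num [pow_split]) (by norm_num)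
        (by norm_num) (hmono 23768741896345550770650537601358310 (by norm_num) hQ)
    · have hQ : (2305567963945518424753102147331756070:ℕ) ≤ ∏ p ∈ S, p := by
        have h := minprod 25 (by norm_num) S hS (by omega)
        rwa [show Qlist.getD 25 1 = 2305567963945518424753102147331756070 from by decide] at h
      exact base_gen 25 83 745 1 3510 2305567963945518424753102147331756070 (by norm_num [pow_split]) (by norm_num [pow_split]) (by norm_num)
        (by norm_num) (hmono 2305567963945518424753102147331756070 (by norm_num) hQ)
    · have hQ : (232862364358497360900063316880507363070:ℕ) ≤ ∏ p ∈ S, p := by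
        have h := minprod 26 (by norm_num) S hS (by omega)
        rwa [show Qlist.getD 26 1 = 232862364358497360900063316880507363070 from by decide] at h
      exact base_gen 26 88 351 1 3565 232862364358497360900063316880507363070 (by norm_num [pow_split]) (by norm_num [pow_split]) (by norm_num)
        (by norm_num) (hmono 232862364358497360900063316880507363070 (by norm_num) hQ)
    · have hQ : (23984823528925228172706521638692258396210:ℕ) ≤ ∏ p ∈ S, p := by
        have h := minprod 27 (by norm_num) S hS (by omega)
        rwa [show Qlist.getD 27 1 = 23984823528925228172706521638692258396210 from by decide] at h
      exact base_gen 27 92 1001 1 3618 23984823528925228172706521638692258396210 (by norm_num [pow_split]) (by norm_num [pow_split]) (by norm_num)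
        (by norm_num) (hmono 23984823528925228172706521638692258396210 (by norm_num) hQ)
    · have hQ : (2566376117594999414479597815340071648394470:ℕ) ≤ ∏ p ∈ S, p := by
        have h := minprod 28 (by norm_num) S hS (by omega)
        rwa [show Qlist.getD 28 1 = 2566376117594999414479597815340071648394470 from by decide] at h
      exact base_gen 28 97 666 1 3668 2566376117594999414479597815340071648394470 (by norm_num [pow_split]) (by norm_num [pow_split]) (by norm_num)
        (by norm_num) (hmono 2566376117594999414479597815340071648394470 (by norm_num) hQ)
    · have hQ : (279734996817854936178276161872067809674997230:ℕ) ≤ ∏ p ∈ S, p := by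
        have h := minprod 29 (by norm_num) S hS (by omega)
        rwa [show Qlist.getD 29 1 = 279734996817854936178276161872067809674997230 from by decide] at h
      exact base_gen 29 102 350 1 3716 279734996817854936178276161872067809674997230 (by norm_num [pow_split]) (by norm_num [pow_split]) (by norm_num)
        (by norm_num) (hmono 279734996817854936178276161872067809674997230 (by norm_num) hQ)
    · have hQ : (31610054640417607788145206291543662493274686990:ℕ) ≤ ∏ p ∈ S, p := by
        have h := minprod 30 (by norm_num) S hS (by omega)
        rwa [show Qlist.getD 30 1 = 31610054640417607788145206291543662493274686990 from by decide] at h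
      exact base_gen 30 107 71 1 3762 31610054640417607788145206291543662493274686990 (by norm_num [pow_split]) (by norm_num [pow_split]) (by norm_num)
        (by norm_num) (hmono 31610054640417607788145206291543662493274686990 (by norm_num) hQ)
    · have hQ : (4014476939333036189094441199026045136645885247730:ℕ) ≤ ∏ p ∈ S, p := by
        have h := minprod 31 (by norm_num) S hS (by omega)
        rwa [show Qlist.getD 31 1 = 4014476939333036189094441199026045136645885247730 from by decide] at h
      exact base_gen 31 111 935 1 3807 4014476939333036189094441199026045136645885247730 (by norm_num [pow_split]) (by norm_num [pow_split]) (by norm_num)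
        (by norm_num) (hmono 4014476939333036189094441199026045136645885247730 (by norm_num) hQ)
    · have hQ : (525896479052627740771371797072411912900610967452630:ℕ) ≤ ∏ p ∈ S, p := by
        have h := minprod 32 (by norm_num) S hS (by omega)
        rwa [show Qlist.getD 32 1 = 525896479052627740771371797072411912900610967452630 from by decide] at h
      exact base_gen 32 116 808 1 3851 525896479052627740771371797072411912900610967452630 (by norm_num [pow_split]) (by norm_num [pow_split]) (by norm_num)
        (by norm_num) (hmono 525896479052627740771371797072411912900610967452630 (by norm_num) hQ)
    · have hQ : (72047817630210000485677936198920432067383702541010310:ℕ) ≤ ∏ p ∈ S, p := by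
        have h := minprod 33 (by norm_num) S hS (by omega)
        rwa [show Qlist.getD 33 1 = 72047817630210000485677936198920432067383702541010310 from by decide] at h
      exact base_gen 33 121 726 1 3893 72047817630210000485677936198920432067383702541010310 (by norm_num [pow_split]) (by norm_num [pow_split]) (by norm_num)
        (by norm_num) (hmono 72047817630210000485677936198920432067383702541010310 (by norm_num) hQ)
    · have hQ : (10014646650599190067509233131649940057366334653200433090:ℕ) ≤ ∏ p ∈ S, p := by
        have h := minprod 34 (by norm_num) S hS (by omega)
        rwa [show Qlist.getD 34 1 = 10014646650599190067509233131649940057366334653200433090 from by decide] at h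
      exact base_gen 34 126 659 1 3934 10014646650599190067509233131649940057366334653200433090 (by norm_num [pow_split]) (by norm_num [pow_split]) (by norm_num)
        (by norm_num) (hmono 10014646650599190067509233131649940057366334653200433090 (by norm_num) hQ)
    · have hQ : (1492182350939279320058875736615841068547583863326864530410:ℕ) ≤ ∏ p ∈ S, p := by
        have h := minprod 35 (by norm_num) S hS (by omega)
        rwa [show Qlist.getD 35 1 = 1492182350939279320058875736615841068547583863326864530410 from by decide] at h
      exact base_gen 35 131 663 1 3974 1492182350939279320058875736615841068547583863326864530410 (by norm_num [pow_split]) (by norm_num [pow_split]) (by norm_num)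
        (by norm_num) (hmono 1492182350939279320058875736615841068547583863326864530410 (by norm_num) hQ)
    · have hQ : (225319534991831177328890236228992001350685163362356544091910:ℕ) ≤ ∏ p ∈ S, p := by
        have h := minprod 36 (by norm_num) S hS (by omega)
        rwa [show Qlist.getD 36 1 = 225319534991831177328890236228992001350685163362356544091910 from by decide] at h
      exact base_gen 36 136 680 1 4012 225319534991831177328890236228992001350685163362356544091910 (by norm_num [pow_split]) (by norm_num [pow_split]) (by norm_num)
        (by norm_num) (hmono 225319534991831177328890236228992001350685163362356544091910 (by norm_num) hQ)
    · have hQ : (35375166993717494840635767087951744212057570647889977422429870:ℕ) ≤ ∏ p ∈ S, p := by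
        have h := minprod 37 (by norm_num) S hS (by omega)
        rwa [show Qlist.getD 37 1 = 35375166993717494840635767087951744212057570647889977422429870 from by decide] at h
      exact base_gen 37 141 738 1 4049 35375166993717494840635767087951744212057570647889977422429870 (by norm_num [pow_split]) (by norm_num [pow_split]) (by norm_num)
        (by norm_num) (hmono 35375166993717494840635767087951744212057570647889977422429870 (by norm_num) hQ)
    · have hQ : (5766152219975951659023630035336134306565384015606066319856068810:ℕ) ≤ ∏ p ∈ S, p := by
        have h := minprod 38 (by norm_num) S hS (by omega)
        rwa [show Qlist.getD 38 1 = 5766152219975951659023630035336134306565384015606066319856068810 from by decide] at h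
      exact base_gen 38 146 834 1 4085 5766152219975951659023630035336134306565384015606066319856068810 (by norm_num [pow_split]) (by norm_num [pow_split]) (by norm_num)
        (by norm_num) (hmono 5766152219975951659023630035336134306565384015606066319856068810 (by norm_num) hQ)
    · have hQ : (962947420735983927056946215901134429196419130606213075415963491270:ℕ) ≤ ∏ p ∈ S, p := by
        have h := minprod 39 (by norm_num) S hS (by omega)
        rwa [show Qlist.getD 39 1 = 962947420735983927056946215901134429196419130606213075415963491270 from by decide] at h
      exact base_gen 39 151 955 1 4120 962947420735983927056946215901134429196419130606213075415963491270 (by norm_num [pow_split]) (by norm_num [pow_split]) (by norm_num)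
        (by norm_num) (hmono 962947420735983927056946215901134429196419130606213075415963491270 (by norm_num) hQ)
  · -- n ≥ 40
    have hne : S.Nonempty := Finset.card_pos.1 (by omega)
    have hqS : S.max' hne ∈ S := S.max'_mem hne
    set q := S.max' hne with hqdef
    have hqprime : Nat.Prime q := hS q hqS
    have hcard' : (S.erase q).card = n - 1 := by
      rw [Finset.card_erase_of_mem hqS, hcard]
    have hprim' : ∀ p ∈ S.erase q, Nat.Prime p := fun p hp => hS p (Finset.mem_of_mem_erase hp)
    have hsplit := (Finset.add_sum_erase S (fun p => Real.log (p:ℝ)) hqS).symm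
    set T' := ∑ p ∈ S.erase q, Real.log (p:ℝ) with hT'def
    set δ := Real.log (q:ℝ) with hδdef
    have hIH := IH (n-1) (by omega) (S.erase q) hprim' hcard' (by omega)
    have hne0' : ∀ p ∈ S.erase q, ((p:ℝ)) ≠ 0 :=
      fun p hp => Nat.cast_ne_zero.2 (hprim' p hp).pos.ne'
    have hlogprod' : Real.log ((∏ p ∈ S.erase q, p : ℕ):ℝ) = T' := by
      rw [Nat.cast_prod, Real.log_prod hne0']
    have hprodpos' : 0 < ∏ p ∈ S.erase q, p :=
      Finset.prod_pos (fun p hp => (hprim' p hp).pos)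
    have hQ39 : 962947420735983927056946215901134429196419130606213075415963491270 ≤ ∏ p ∈ S.erase q, p := by
      have h := minprod 39 le_rfl (S.erase q) hprim' (by omega)
      rwa [show Qlist.getD 39 1 = 962947420735983927056946215901134429196419130606213075415963491270 from by decide] at h
    have hT151 : (151:ℝ) ≤ T' := by
      rw [← hlogprod']
      calc (151:ℝ) ≤ (151:ℝ) + (955:ℝ)/1024 := by norm_num
        _ = ((151:ℕ):ℝ) + ((955:ℕ):ℝ)/1024 := by norm_num
        _ ≤ Real.log ((962947420735983927056946215901134429196419130606213075415963491270:ℕ):ℝ) := log_ge_cert 151 955 (by norm_num [pow_split])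
        _ ≤ Real.log ((∏ p ∈ S.erase q, p : ℕ):ℝ) :=
            Real.log_le_log (by norm_num) (by exact_mod_cast hQ39)
    have hT'0 : (0:ℝ) < T' := by linarith
    have hu5 : (5:ℝ) ≤ Real.log T' := by
      have hc : (2.7182818286:ℝ)^(5:ℕ) * 1.0009770395^(0:ℕ) ≤ T' := by
        norm_num
        linarith
      have := log_ge_cert 5 0 hc
      norm_num at this
      exact this
    have hδ0 : 0 < δ := Real.log_pos (by exact_mod_cast hqprime.one_lt)
    have hsub : S.erase q ⊆ (Finset.range q).filter Nat.Prime := by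
      intro p hp
      rcases Finset.mem_erase.1 hp with ⟨hne', hpS⟩
      exact Finset.mem_filter.2
        ⟨Finset.mem_range.2 (lt_of_le_of_ne (S.le_max' p hpS) hne'), hS p hpS⟩
    have hprodle : ∏ p ∈ S.erase q, p ≤ 4 ^ q := by
      calc ∏ p ∈ S.erase q, p ≤ ∏ p ∈ (Finset.range q).filter Nat.Prime, p :=
          Finset.prod_le_prod_of_subset_of_one_le' hsub
            (fun i hi _ => (Finset.mem_filter.1 hi).2.one_lt.le)
        _ = primorial (q-1) := by
            rw [primorial, show q - 1 + 1 = q from by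
              have := hqprime.two_le; omega]
        _ ≤ 4 ^ (q-1) := primorial_le_4_pow _
        _ ≤ 4 ^ q := Nat.pow_le_pow_right (by norm_num) (Nat.sub_le q 1)
    have hT'q : T' ≤ (q:ℝ) * (2 * Real.log 2) := by
      rw [← hlogprod']
      calc Real.log ((∏ p ∈ S.erase q, p : ℕ):ℝ) ≤ Real.log ((4:ℝ)^(q:ℕ)) := by
            apply Real.log_le_log (by exact_mod_cast hprodpos')
            exact_mod_cast hprodle
        _ = (q:ℝ) * Real.log 4 := by rw [Real.log_pow]
        _ = (q:ℝ) * (2 * Real.log 2) := by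
            rw [show (4:ℝ) = 2^(2:ℕ) by norm_num, Real.log_pow]
            norm_num
    have h2l2 : (0:ℝ) < 2 * Real.log 2 := by
      have := Real.log_pos (by norm_num : (1:ℝ) < 2); linarith
    have hδu : Real.log T' - 335/1024 ≤ δ := by
      have hqge : T' / (2 * Real.log 2) ≤ (q:ℝ) := (div_le_iff₀ h2l2).2 hT'q
      have hlql : Real.log (T' / (2 * Real.log 2)) ≤ δ :=
        Real.log_le_log (div_pos hT'0 h2l2) hqge
      rw [Real.log_div (ne_of_gt hT'0) (ne_of_gt h2l2)] at hlql
      have hll : Real.log (2 * Real.log 2) ≤ 335/1024 := by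
        have hb : (2:ℝ) * Real.log 2 ≤ 1.3862944 := by
          have := Real.log_two_lt_d9; linarith
        calc Real.log (2*Real.log 2) ≤ Real.log (1.3862944:ℝ) := Real.log_le_log h2l2 hb
          _ ≤ ((0:ℕ):ℝ) + ((335:ℕ):ℝ)/1024 := log_le_cert 0 335 (by norm_num) (by norm_num [pow_split])
          _ = 335/1024 := by norm_num
      linarith
    have hLT : Real.log (T' + δ) ≤ Real.log T' + δ/T' := by
      have h1 : Real.log ((T' + δ)/T') ≤ (T' + δ)/T' - 1 :=
        Real.log_le_sub_one_of_pos (by positivity)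
      rw [Real.log_div (by linarith) (ne_of_gt hT'0)] at h1
      have h2 : (T' + δ)/T' - 1 = δ/T' := by field_simp; ring
      rw [h2] at h1
      linarith
    rw [Nat.cast_sub (by omega : 1 ≤ n), Nat.cast_one] at hIH
    have hstep := step_num Real.log_two_lt_d9.le (Real.log_pos (by norm_num : (1:ℝ) < 2))
      hu5 hT151 hδu hδ0 (by
        have : (40:ℝ) ≤ (n:ℝ) := by exact_mod_cast (by omega : 40 ≤ n)
        linarith) hIH
    have hn1 : ((n:ℝ)-1)+1 = (n:ℝ) := by ring
    rw [hn1] at hstep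
    have hsplit' : (∑ p ∈ S, Real.log (p:ℝ)) = T' + δ := by
      rw [hsplit]; ring
    rw [hsplit']
    calc Real.log 2 * (n:ℝ) * Real.log (T' + δ)
        ≤ Real.log 2 * (n:ℝ) * (Real.log T' + δ/T') :=
          mul_le_mul_of_nonneg_left hLT
            (mul_nonneg (Real.log_nonneg (by norm_num)) (Nat.cast_nonneg n))
      _ ≤ 0.96 * (T' + δ) := hstep

/-! ### Main theorem -/

/-- For all `t ≥ 3`, `W(t-1) < t^{0.96/log log t}`. -/
theorem W_lt (t : ℕ) (ht : 3 ≤ t) :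
    (W (t - 1) : ℝ) < (t : ℝ) ^ (0.96 / Real.log (Real.log t)) := by
  set m := t - 1 with hmdef
  have hm0 : m ≠ 0 := by omega
  set k := m.primeFactors.card with hkdef
  have hW : (W m : ℝ) = 2 ^ k := by rw [W_eq hm0]; push_cast; ring
  set X := Real.log (t:ℝ) with hXdef
  have ht0 : (0:ℝ) < (t:ℝ) := by positivity
  have hX1 : 1 < X := by
    have h3 : Real.log 3 ≤ X := Real.log_le_log (by norm_num) (by exact_mod_cast ht)
    have he3 : (1:ℝ) < Real.log 3 := by
      rw [show (1:ℝ) = Real.log (Real.exp 1) from (Real.log_exp 1).symm]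
      exact Real.log_lt_log (Real.exp_pos 1)
        (lt_of_lt_of_le Real.exp_one_lt_d9 (by norm_num))
    linarith
  have hX0 : 0 < X := by linarith
  have hLX : 0 < Real.log X := Real.log_pos hX1
  have hkey : Real.log 2 * (k:ℝ) * Real.log X < 0.96 * X := by
    rcases le_or_gt k 3 with h3 | h4
    · have helog : Real.exp 1 * Real.log X ≤ X := by
        have h1 : Real.log (X / Real.exp 1) ≤ X / Real.exp 1 - 1 :=
          Real.log_le_sub_one_of_pos (by positivity)
        rw [Real.log_div (ne_of_gt hX0) (Real.exp_ne_zero 1), Real.log_exp] at h1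
        have h2 : Real.log X ≤ X / Real.exp 1 := by linarith
        calc Real.exp 1 * Real.log X ≤ Real.exp 1 * (X / Real.exp 1) :=
            mul_le_mul_of_nonneg_left h2 (Real.exp_pos 1).le
          _ = X := by field_simp
      have hA : Real.log 2 < 0.6931471808 := Real.log_two_lt_d9
      have hA0 : 0 < Real.log 2 := Real.log_pos (by norm_num)
      have hk3 : (k:ℝ) ≤ 3 := by exact_mod_cast h3
      have hs1 : Real.log 2 * (k:ℝ) * Real.log X ≤ Real.log 2 * 3 * Real.log X :=
        mul_le_mul_of_nonneg_right (mul_le_mul_of_nonneg_left hk3 hA0.le) hLX.le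
      have hp1 : Real.log 2 * Real.log X < 0.6931471808 * Real.log X :=
        mul_lt_mul_of_pos_right hA hLX
      have hp2 : (2.7182818283:ℝ) * Real.log X < Real.exp 1 * Real.log X :=
        mul_lt_mul_of_pos_right Real.exp_one_gt_d9 hLX
      have hs2 : Real.log 2 * 3 * Real.log X < 0.96 * (Real.exp 1 * Real.log X) := by
        nlinarith [hp1, hp2, hLX]
      have hs3 : 0.96 * (Real.exp 1 * Real.log X) ≤ 0.96 * X := by linarith
      linarith
    · set S := m.primeFactors with hSdef
      have hSprime : ∀ p ∈ S, Nat.Prime p := fun p hp => Nat.prime_of_mem_primeFactors hp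
      have hC := C_ind k S hSprime rfl h4
      have hprodpos : 0 < ∏ p ∈ S, p := Finset.prod_pos (fun p hp => (hSprime p hp).pos)
      have hlogprod : Real.log ((∏ p ∈ S, p : ℕ):ℝ) = ∑ p ∈ S, Real.log (p:ℝ) := by
        rw [Nat.cast_prod,
          Real.log_prod (fun p hp => Nat.cast_ne_zero.2 (hSprime p hp).pos.ne')]
      have hdvd : (∏ p ∈ S, p) ∣ m := Nat.prod_primeFactors_dvd m
      have hprodle : (∏ p ∈ S, p) ≤ m := Nat.le_of_dvd (by omega) hdvd
      have hQ4 : 210 ≤ ∏ p ∈ S, p := by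
        have h := minprod 4 (by norm_num) S hSprime (by omega)
        rwa [show Qlist.getD 4 1 = 210 from by decide] at h
      have hT5 : (5:ℝ) ≤ ∑ p ∈ S, Real.log (p:ℝ) := by
        rw [← hlogprod]
        have hc : (2.7182818286:ℝ)^(5:ℕ) * 1.0009770395^(0:ℕ) ≤ ((210:ℕ):ℝ) := by norm_num
        have h5 := log_ge_cert 5 0 hc
        norm_num at h5
        calc (5:ℝ) ≤ Real.log ((210:ℕ):ℝ) := h5
          _ ≤ Real.log ((∏ p ∈ S, p : ℕ):ℝ) :=
            Real.log_le_log (by norm_num) (by exact_mod_cast hQ4)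
      have hTX : (∑ p ∈ S, Real.log (p:ℝ)) < X := by
        rw [← hlogprod]
        apply Real.log_lt_log (by exact_mod_cast hprodpos)
        exact_mod_cast (by omega : (∏ p ∈ S, p) < t)
      have hex : Real.exp 1 < ∑ p ∈ S, Real.log (p:ℝ) :=
        lt_of_lt_of_le (lt_of_lt_of_le Real.exp_one_lt_d9 (by norm_num)) hT5
      exact key_mono_strict (mul_nonneg (Real.log_nonneg (by norm_num)) (Nat.cast_nonneg k))
        hex hTX hC
  have h2k : (2:ℝ)^k = Real.exp ((k:ℝ) * Real.log 2) := by
    rw [← Real.log_pow, Real.exp_log (by positivity)]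
  have hrpow : (t:ℝ) ^ (0.96 / Real.log X) = Real.exp (X * (0.96 / Real.log X)) := by
    rw [Real.rpow_def_of_pos ht0]
  rw [hW, hrpow, h2k]
  apply Real.exp_lt_exp.2
  rw [show X * (0.96 / Real.log X) = (0.96 * X) / Real.log X by ring, lt_div_iff₀ hLX]
  nlinarith [hkey]
end

section
/- Let n > 1 be an integer that is not a prime power, and let d_1 < ⋯ < d_k < n be divisors of n such that d_i ∤ d_j for all i ≠ j. Then λ(d) := deg(lcm(x^{d_1} − 1, …, x^{d_k} − 1)) satisfies λ(d) ≤ n − φ(n), where φ is Euler's totient function. -/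
open Finset Polynomial

/-- Let `n > 1` not be a prime power and `d_1 < ⋯ < d_k < n` be divisors of `n` with
`d_i ∤ d_j` for `i ≠ j`. Then `deg lcm(x^{d_1}-1,…,x^{d_k}-1) ≤ n - φ(n)`. -/
theorem lambda_le (n k : ℕ) (hn : 1 < n) (hnpp : ¬ IsPrimePow n) (hk : 1 < k)
    (d : Fin k → ℕ) (hmono : StrictMono d) (hdvd : ∀ i, d i ∣ n) (hlt : ∀ i, d i < n)
    (hnd : ∀ i j, i ≠ j → ¬ d i ∣ d j) :
    ((Finset.univ : Finset (Fin k)).lcm fun i => (X : Polynomial ℚ) ^ d i - 1).natDegree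
      ≤ n - Nat.totient n := by
  set P : Polynomial ℚ := ∏ e ∈ n.divisors.erase n, cyclotomic e ℚ with hP
  have hPne : P ≠ 0 := by
    apply Finset.prod_ne_zero_iff.mpr
    intro e _
    exact cyclotomic_ne_zero e ℚ
  have hdvdP : (Finset.univ : Finset (Fin k)).lcm
      (fun i => (X : Polynomial ℚ) ^ d i - 1) ∣ P := by
    apply Finset.lcm_dvd
    intro i _
    have hdi : 0 < d i := Nat.pos_of_dvd_of_pos (hdvd i) (by omega)
    rw [← prod_cyclotomic_eq_X_pow_sub_one hdi ℚ]
    apply Finset.prod_dvd_prod_of_subset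
    intro e he
    rw [Nat.mem_divisors] at he
    rw [Finset.mem_erase, Nat.mem_divisors]
    refine ⟨?_, he.1.trans (hdvd i), by omega⟩
    intro hen
    subst hen
    have := Nat.le_of_dvd hdi he.1
    have := hlt i
    omega
  have h1 := Polynomial.natDegree_le_of_dvd hdvdP hPne
  refine h1.trans ?_
  have h2 : P.natDegree = ∑ e ∈ n.divisors.erase n, e.totient := by
    rw [hP, Polynomial.natDegree_prod _ _ (fun e _ => cyclotomic_ne_zero e ℚ)]
    exact Finset.sum_congr rfl fun e _ => natDegree_cyclotomic e ℚ
  rw [h2]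
  have hnmem : n ∈ n.divisors := Nat.mem_divisors_self n (by omega)
  have := Finset.add_sum_erase n.divisors Nat.totient hnmem
  have hsum : ∑ e ∈ n.divisors, e.totient = n := Nat.sum_totient n
  omega
end

section
/- If p_1, …, p_t are the distinct prime divisors of n, then the degree of lcm(x^{n/p_1} − 1, …, x^{n/p_t} − 1) equals n − φ(n), where φ is Euler's totient function. -/
open Finset Polynomial UniqueFactorizationMonoid

section DistribLemmas

variable {α : Type*} [CommMonoidWithZero α] [IsCancelMulZero α] [NormalizedGCDMonoid α]
  [UniqueFactorizationMonoid α] [Nontrivial α] [DecidableEq α]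

private theorem myNfProd {S : Multiset α}
    (h : ∀ a ∈ S, Irreducible a ∧ normalize a = a) :
    normalizedFactors S.prod = S := by
  rw [normalizedFactors_prod_eq _ fun a ha => (h a ha).1]
  exact (Multiset.map_congr rfl fun a ha => (h a ha).2).trans (Multiset.map_id _)

private theorem myProdNeZero {S : Multiset α} (h : ∀ a ∈ S, Irreducible a) :
    S.prod ≠ 0 := by
  rw [Ne, Multiset.prod_eq_zero_iff]
  intro h0
  exact not_irreducible_zero (h 0 h0)

private theorem my_gcd_lcm_distrib (c u v : α) :
    gcd c (lcm u v) = lcm (gcd c u) (gcd c v) := by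
  refine dvd_antisymm_of_normalize_eq (normalize_gcd _ _) (normalize_lcm _ _) ?_ ?_
  · -- hard direction
    rcases eq_or_ne u 0 with rfl | hu
    · rw [lcm_zero_left]
      exact dvd_lcm_left _ _
    rcases eq_or_ne v 0 with rfl | hv
    · rw [lcm_zero_right]
      exact dvd_lcm_right _ _
    rcases eq_or_ne c 0 with rfl | hc
    · rw [gcd_zero_left, gcd_zero_left, gcd_zero_left, normalize_dvd_iff]
      exact lcm_dvd ((normalize_associated u).symm.dvd.trans (dvd_lcm_left _ _))
        ((normalize_associated v).symm.dvd.trans (dvd_lcm_right _ _))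
    -- main case: c, u, v ≠ 0
    have hlcm : lcm u v ≠ 0 := by
      rw [Ne, _root_.lcm_eq_zero_iff]; tauto
    have hg : gcd c (lcm u v) ≠ 0 := by
      rw [Ne, _root_.gcd_eq_zero_iff]; tauto
    have hfactsU : ∀ a ∈ normalizedFactors u ⊔ normalizedFactors v,
        Irreducible a ∧ normalize a = a := by
      intro a ha
      rw [Multiset.sup_eq_union, Multiset.mem_union] at ha
      rcases ha with ha | ha
      exacts [⟨irreducible_of_normalized_factor a ha, normalize_normalized_factor a ha⟩,
        ⟨irreducible_of_normalized_factor a ha, normalize_normalized_factor a ha⟩]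
    have hprodBC : (normalizedFactors u ⊔ normalizedFactors v).prod ≠ 0 :=
      myProdNeZero fun a ha => (hfactsU a ha).1
    have h1 : normalizedFactors (gcd c (lcm u v)) ≤ normalizedFactors c :=
      (dvd_iff_normalizedFactors_le_normalizedFactors hg hc).mp (gcd_dvd_left _ _)
    have hlcmdvd : lcm u v ∣ (normalizedFactors u ⊔ normalizedFactors v).prod := by
      refine lcm_dvd ?_ ?_
      · exact ((prod_normalizedFactors hu).symm.dvd).trans
          (Multiset.prod_dvd_prod_of_le le_sup_left)
      · exact ((prod_normalizedFactors hv).symm.dvd).trans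
          (Multiset.prod_dvd_prod_of_le le_sup_right)
    have h2 : normalizedFactors (gcd c (lcm u v)) ≤
        normalizedFactors u ⊔ normalizedFactors v := by
      have := (dvd_iff_normalizedFactors_le_normalizedFactors hg hprodBC).mp
        ((gcd_dvd_right _ _).trans hlcmdvd)
      rwa [myNfProd hfactsU] at this
    have key : normalizedFactors (gcd c (lcm u v)) ≤
        (normalizedFactors c ⊓ normalizedFactors u) ⊔
          (normalizedFactors c ⊓ normalizedFactors v) := by
      rw [← inf_sup_left]
      exact le_inf h1 h2
    -- the two inf-pieces
    have hpiece : ∀ w : α, w ≠ 0 →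
        (normalizedFactors c ⊓ normalizedFactors w).prod ∣ gcd c w := by
      intro w hw
      refine dvd_gcd ?_ ?_
      · exact (Multiset.prod_dvd_prod_of_le inf_le_left).trans
          (prod_normalizedFactors hc).dvd
      · exact (Multiset.prod_dvd_prod_of_le inf_le_right).trans
          (prod_normalizedFactors hw).dvd
    have hfactspiece : ∀ w : α, (∀ a ∈ normalizedFactors c ⊓ normalizedFactors w,
        Irreducible a ∧ normalize a = a) := by
      intro w a ha
      rw [Multiset.inf_eq_inter, Multiset.mem_inter] at ha
      exact ⟨irreducible_of_normalized_factor a ha.1, normalize_normalized_factor a ha.1⟩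
    have hgcdu : gcd c u ≠ 0 := by rw [Ne, _root_.gcd_eq_zero_iff]; tauto
    have hgcdv : gcd c v ≠ 0 := by rw [Ne, _root_.gcd_eq_zero_iff]; tauto
    have hlcm2 : lcm (gcd c u) (gcd c v) ≠ 0 := by
      rw [Ne, _root_.lcm_eq_zero_iff]; tauto
    have hsub : ∀ w : α, w ≠ 0 → gcd c w ∣ lcm (gcd c u) (gcd c v) →
        normalizedFactors c ⊓ normalizedFactors w ≤
          normalizedFactors (lcm (gcd c u) (gcd c v)) := by
      intro w hw hdvd
      have hgw : gcd c w ≠ 0 := by rw [Ne, _root_.gcd_eq_zero_iff]; tauto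
      have hpne : (normalizedFactors c ⊓ normalizedFactors w).prod ≠ 0 :=
        myProdNeZero fun a ha => (hfactspiece w a ha).1
      have := (dvd_iff_normalizedFactors_le_normalizedFactors hpne hlcm2).mp
        ((hpiece w hw).trans hdvd)
      rwa [myNfProd (hfactspiece w)] at this
    have hsup : (normalizedFactors c ⊓ normalizedFactors u) ⊔
        (normalizedFactors c ⊓ normalizedFactors v) ≤
          normalizedFactors (lcm (gcd c u) (gcd c v)) :=
      sup_le (hsub u hu (dvd_lcm_left _ _)) (hsub v hv (dvd_lcm_right _ _))
    calc gcd c (lcm u v) ∣ (normalizedFactors (gcd c (lcm u v))).prod :=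
          (prod_normalizedFactors hg).symm.dvd
      _ ∣ (normalizedFactors (lcm (gcd c u) (gcd c v))).prod :=
          Multiset.prod_dvd_prod_of_le (key.trans hsup)
      _ ∣ lcm (gcd c u) (gcd c v) := (prod_normalizedFactors hlcm2).dvd
  · -- easy direction
    refine lcm_dvd (dvd_gcd (gcd_dvd_left _ _) ((gcd_dvd_right _ _).trans (dvd_lcm_left _ _)))
      (dvd_gcd (gcd_dvd_left _ _) ((gcd_dvd_right _ _).trans (dvd_lcm_right _ _)))

private theorem my_gcd_finset_lcm {β : Type*} [DecidableEq β] (c : α) (S : Finset β)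
    (f : β → α) : gcd c (S.lcm f) = S.lcm fun b => gcd c (f b) := by
  induction S using Finset.induction with
  | empty => simp
  | insert _ _ h ih => rw [Finset.lcm_insert, Finset.lcm_insert, my_gcd_lcm_distrib, ih]

end DistribLemmas

section PolyLemmas

variable {F : Type*} [Field F] [DecidableEq F]

private theorem myMonic {a : ℕ} (ha : 0 < a) : ((X : F[X]) ^ a - 1).Monic := by
  have : ((X : F[X]) ^ a - 1) = X ^ a - C 1 := by rw [C_1]
  rw [this]
  exact monic_X_pow_sub_C 1 ha.ne'

private theorem myNatDegree (a : ℕ) : ((X : F[X]) ^ a - 1).natDegree = a := by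
  rcases Nat.eq_zero_or_pos a with rfl | ha
  · simp
  · have : ((X : F[X]) ^ a - 1) = X ^ a - C 1 := by rw [C_1]
    rw [this, natDegree_X_pow_sub_C]

private theorem myNeZero {a : ℕ} (ha : 0 < a) : ((X : F[X]) ^ a - 1) ≠ 0 :=
  (myMonic ha).ne_zero

private theorem myNormalize (a : ℕ) : normalize ((X : F[X]) ^ a - 1) = (X : F[X]) ^ a - 1 := by
  rcases Nat.eq_zero_or_pos a with rfl | ha
  · simp
  · exact (myMonic ha).normalize_eq_self

private theorem myGcdAddMul (a b c : F[X]) : gcd a (b + c * a) = gcd a b := by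
  refine dvd_antisymm_of_normalize_eq (normalize_gcd _ _) (normalize_gcd _ _) ?_ ?_
  · refine dvd_gcd (gcd_dvd_left _ _) ?_
    have h := (gcd_dvd_right a (b + c * a)).sub ((gcd_dvd_left a (b + c * a)).mul_left c)
    simpa using h
  · exact dvd_gcd (gcd_dvd_left _ _) ((gcd_dvd_right a b).add ((gcd_dvd_left a b).mul_left c))

private theorem myGcdPow (a b : ℕ) :
    GCDMonoid.gcd ((X : F[X]) ^ a - 1) ((X : F[X]) ^ b - 1) = (X : F[X]) ^ (Nat.gcd a b) - 1 := by
  induction a, b using Nat.gcd.induction with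
  | H0 n => rw [Nat.gcd_zero_left, pow_zero, sub_self, gcd_zero_left, myNormalize]
  | H1 m n hm ih =>
    have hdvd : ((X : F[X]) ^ m - 1) ∣ (X : F[X]) ^ (m * (n / m)) - 1 := by
      have h := sub_dvd_pow_sub_pow ((X : F[X]) ^ m) 1 (n / m)
      simpa [← pow_mul] using h
    obtain ⟨t, ht⟩ := hdvd
    have hn : ((X : F[X]) ^ n - 1) =
        ((X : F[X]) ^ (n % m) - 1) + ((X : F[X]) ^ (n % m) * t) * ((X : F[X]) ^ m - 1) := by
      have h2 : n = m * (n / m) + n % m := (Nat.div_add_mod n m).symm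
      calc ((X : F[X]) ^ n - 1) = X ^ (m * (n / m)) * X ^ (n % m) - 1 := by
            rw [← pow_add, ← h2]
        _ = ((X : F[X]) ^ (n % m) - 1) + ((X : F[X]) ^ (n % m) * t) * ((X : F[X]) ^ m - 1) := by
            have h3 : (X : F[X]) ^ (m * (n / m)) = ((X : F[X]) ^ m - 1) * t + 1 := by
              rw [← ht]; ring
            rw [h3]; ring
    rw [hn, myGcdAddMul, gcd_comm, ih, Nat.gcd_rec m n]

end PolyLemmas

private def Amodel (a : ℕ) : Finset (ℕ × ℕ) :=
  a.divisors.biUnion fun d => {d} ×ˢ Finset.range d.totient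

private theorem mem_Amodel {p : ℕ × ℕ} {a : ℕ} :
    p ∈ Amodel a ↔ p.1 ∣ a ∧ a ≠ 0 ∧ p.2 < p.1.totient := by
  rcases p with ⟨d, j⟩
  simp only [Amodel, Finset.mem_biUnion, Finset.mem_product, Finset.mem_singleton,
    Finset.mem_range, Nat.mem_divisors]
  constructor
  · rintro ⟨e, ⟨he, ha⟩, rfl, hj⟩
    exact ⟨he, ha, hj⟩
  · rintro ⟨he, ha, hj⟩
    exact ⟨d, ⟨he, ha⟩, rfl, hj⟩

private theorem card_Amodel (a : ℕ) : (Amodel a).card = a := by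
  rw [Amodel, Finset.card_biUnion]
  · simp only [Finset.card_product, Finset.card_singleton, Finset.card_range, one_mul]
    exact Nat.sum_totient a
  · intro x hx y hy hxy
    rw [Function.onFun, Finset.disjoint_left]
    rintro ⟨d, j⟩ h1 h2
    simp only [Finset.mem_product, Finset.mem_singleton] at h1 h2
    exact hxy (h1.1.symm.trans h2.1)

private theorem Amodel_inter {a b : ℕ} (ha : a ≠ 0) (hb : b ≠ 0) :
    Amodel a ∩ Amodel b = Amodel (Nat.gcd a b) := by
  ext p
  simp only [Finset.mem_inter, mem_Amodel]
  constructor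
  · rintro ⟨⟨h1, -, h3⟩, h4, -, -⟩
    exact ⟨Nat.dvd_gcd h1 h4, fun h => ha (Nat.eq_zero_of_gcd_eq_zero_left h), h3⟩
  · rintro ⟨h1, -, h3⟩
    exact ⟨⟨h1.trans (Nat.gcd_dvd_left a b), ha, h3⟩,
      h1.trans (Nat.gcd_dvd_right a b), hb, h3⟩

private theorem myAssocDeg {F : Type*} [Field F] {p q : F[X]} (h : Associated p q) :
    p.natDegree = q.natDegree := by
  obtain ⟨u, rfl⟩ := h
  rcases eq_or_ne p 0 with rfl | hp
  · simp
  · rw [natDegree_mul hp u.isUnit.ne_zero, natDegree_eq_zero_of_isUnit u.isUnit, add_zero]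

private theorem myKey (F : Type*) [Field F] [DecidableEq F] :
    ∀ (N : ℕ) (S : Finset ℕ), S.card ≤ N → (∀ a ∈ S, 0 < a) →
      (S.lcm fun a => (X : F[X]) ^ a - 1).natDegree = (S.biUnion Amodel).card := by
  intro N
  induction N with
  | zero =>
    intro S hS _
    rw [Finset.card_eq_zero.mp (Nat.le_zero.mp hS)]
    simp
  | succ N ih =>
    intro S hS hpos
    rcases S.eq_empty_or_nonempty with rfl | ⟨b, hb⟩
    · simp
    set T := S.erase b with hT
    have hS' : S = insert b T := (Finset.insert_erase hb).symm
    have hbT : b ∉ T := Finset.notMem_erase _ _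
    have hTcard : T.card ≤ N := by
      have h1 : T.card = S.card - 1 := by
        rw [hT]; exact Finset.card_erase_of_mem hb
      have h2 : 0 < S.card := Finset.card_pos.mpr ⟨b, hb⟩
      omega
    have hbpos := hpos b hb
    have hTpos : ∀ a ∈ T, 0 < a := fun a ha => hpos a (Finset.mem_of_mem_erase ha)
    set f : ℕ → F[X] := fun a => X ^ a - 1 with hf
    have hPne : f b ≠ 0 := myNeZero hbpos
    have hQne : T.lcm f ≠ 0 := by
      rw [Ne, Finset.lcm_eq_zero_iff]
      rintro ⟨a, haT, ha0⟩
      exact myNeZero (hTpos a haT) ha0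
    have hfun : (fun a => GCDMonoid.gcd (f b) (f a)) = fun a => f (Nat.gcd b a) := by
      funext a
      exact myGcdPow b a
    have hG : GCDMonoid.gcd (f b) (T.lcm f) = (T.image fun a => Nat.gcd b a).lcm f := by
      rw [my_gcd_finset_lcm, Finset.lcm_image, hfun]
      rfl
    have hGne : GCDMonoid.gcd (f b) (T.lcm f) ≠ 0 := by
      rw [Ne, _root_.gcd_eq_zero_iff]
      tauto
    have hLne : GCDMonoid.lcm (f b) (T.lcm f) ≠ 0 := by
      rw [Ne, _root_.lcm_eq_zero_iff]
      tauto
    have hdegG : (GCDMonoid.gcd (f b) (T.lcm f)).natDegree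
        = ((T.image fun a => Nat.gcd b a).biUnion Amodel).card := by
      rw [hG]
      refine ih _ (Finset.card_image_le.trans hTcard) ?_
      intro a ha
      obtain ⟨x, hx, rfl⟩ := Finset.mem_image.mp ha
      exact Nat.gcd_pos_of_pos_left x hbpos
    have hdegQ : (T.lcm f).natDegree = (T.biUnion Amodel).card := ih T hTcard hTpos
    have hsum : (GCDMonoid.gcd (f b) (T.lcm f)).natDegree
        + (GCDMonoid.lcm (f b) (T.lcm f)).natDegree = b + (T.lcm f).natDegree := by
      have h2 := myAssocDeg (gcd_mul_lcm (f b) (T.lcm f))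
      rw [natDegree_mul hGne hLne, natDegree_mul hPne hQne] at h2
      rw [h2, myNatDegree]
    have hinter : Amodel b ∩ T.biUnion Amodel
        = (T.image fun a => Nat.gcd b a).biUnion Amodel := by
      ext p
      simp only [Finset.mem_inter, Finset.mem_biUnion, Finset.mem_image]
      constructor
      · rintro ⟨hpb, a, ha, hpa⟩
        refine ⟨Nat.gcd b a, ⟨a, ha, rfl⟩, ?_⟩
        rw [← Amodel_inter hbpos.ne' (hTpos a ha).ne']
        exact Finset.mem_inter.mpr ⟨hpb, hpa⟩
      · rintro ⟨c, ⟨a, ha, rfl⟩, hpc⟩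
        rw [← Amodel_inter hbpos.ne' (hTpos a ha).ne'] at hpc
        obtain ⟨h1, h2⟩ := Finset.mem_inter.mp hpc
        exact ⟨h1, a, ha, h2⟩
    have hcard := Finset.card_union_add_card_inter (Amodel b) (T.biUnion Amodel)
    have hcardAb : (Amodel b).card = b := card_Amodel b
    rw [hS', Finset.lcm_insert, Finset.biUnion_insert]
    rw [hinter] at hcard
    omega

/-- If `p_1, …, p_t` are the distinct prime divisors of `n`, then
`deg lcm(x^{n/p_1}-1, …, x^{n/p_t}-1) = n - φ(n)`, over any field. -/
theorem deg_lcm_eq (n : ℕ) (hn : 1 < n) (F : Type*) [Field F] [DecidableEq F] :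
    (n.primeFactors.lcm fun p => (X : Polynomial F) ^ (n / p) - 1).natDegree
      = n - Nat.totient n := by
  have h0 : n ≠ 0 := by omega
  set S : Finset ℕ := n.primeFactors.image fun p => n / p with hSdef
  have him : n.primeFactors.lcm (fun p => (X : Polynomial F) ^ (n / p) - 1)
      = S.lcm fun a => (X : F[X]) ^ a - 1 := by
    rw [hSdef, Finset.lcm_image]
    rfl
  have hpos : ∀ a ∈ S, 0 < a := by
    intro a ha
    obtain ⟨p, hp, rfl⟩ := Finset.mem_image.mp ha
    obtain ⟨hpp, hpn, -⟩ := Nat.mem_primeFactors.mp hp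
    exact Nat.div_pos (Nat.le_of_dvd (by omega) hpn) hpp.pos
  rw [him, myKey F S.card S le_rfl hpos]
  have hset : S.biUnion Amodel
      = n.properDivisors.biUnion fun d => {d} ×ˢ Finset.range d.totient := by
    ext p
    simp only [Finset.mem_biUnion, Finset.mem_image, mem_Amodel, hSdef,
      Finset.mem_product, Finset.mem_singleton, Nat.mem_properDivisors,
      Finset.mem_range, Nat.mem_primeFactors]
    constructor
    · rintro ⟨a, ⟨q, ⟨hq, hqn, -⟩, rfl⟩, hd, hne, hj⟩
      refine ⟨p.1, ⟨hd.trans (Nat.div_dvd_of_dvd hqn), ?_⟩, rfl, hj⟩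
      calc p.1 ≤ n / q := Nat.le_of_dvd (Nat.pos_of_ne_zero hne) hd
        _ < n := Nat.div_lt_self (by omega) hq.one_lt
    · rintro ⟨d, ⟨hdn, hdlt⟩, h1, hj⟩
      have hnd1 : n / d ≠ 1 := by
        intro h
        have := Nat.div_mul_cancel hdn
        rw [h, one_mul] at this
        omega
      obtain ⟨q, hq, hqd⟩ := Nat.exists_prime_and_dvd hnd1
      obtain ⟨k, hk⟩ := hqd
      have hnval : n = q * (d * k) := by
        have h2 := Nat.div_mul_cancel hdn
        rw [hk] at h2
        rw [← h2]; ring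
      have hqn : q ∣ n := ⟨d * k, hnval⟩
      have hddvd : d ∣ n / q := by
        rw [hnval, Nat.mul_div_cancel_left _ hq.pos]
        exact ⟨k, rfl⟩
      refine ⟨n / q, ⟨q, ⟨hq, hqn, h0⟩, rfl⟩, ?_, ?_, ?_⟩
      · rw [h1]; exact hddvd
      · exact Nat.div_ne_zero_iff.mpr ⟨hq.ne_zero, Nat.le_of_dvd (by omega) hqn⟩
      · rw [h1]; exact hj
  rw [hset, Finset.card_biUnion]
  · have hsum : (∑ d ∈ n.properDivisors, ({d} ×ˢ Finset.range d.totient).card)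
        = ∑ d ∈ n.properDivisors, d.totient := by
      refine Finset.sum_congr rfl fun d _ => ?_
      simp
    rw [hsum]
    have h2 : n.totient + ∑ d ∈ n.properDivisors, d.totient = n := by
      conv_rhs => rw [← Nat.sum_totient n, ← Nat.insert_self_properDivisors h0]
      rw [Finset.sum_insert Nat.self_notMem_properDivisors]
    omega
  · intro x hx y hy hxy
    rw [Function.onFun, Finset.disjoint_left]
    rintro ⟨d, j⟩ h1 h2
    simp only [Finset.mem_product, Finset.mem_singleton] at h1 h2
    exact hxy (h1.1.symm.trans h2.1)
end

section
/- Let q be a prime power, n = 2N with N > 1 odd. There exists b ∈ F_{q^2} with Tr_{N/1}-compatibility such that the pair (b, 0) ∈ F_{q^2} × F_{q^N} is (2,N)-admissible (i.e., Tr_{2/1}(b) = Tr_{N/1}(0) = 0), yet no primitive element α ∈ F_{q^n} satisfies both Tr_{n/2}(α) = b and Tr_{n/N}(α) = 0. -/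
open Finset

/-- `Tr q N d α = ∑_{i=0}^{N/d-1} α^{q^{d·i}}`, the trace from `F_{q^N}` to `F_{q^d}`. -/
noncomputable def Tr (q N d : ℕ) {K : Type*} [Field K] (α : K) : K :=
  ∑ i ∈ Finset.range (N / d), α ^ q ^ (d * i)

/-- A primitive element: a generator of the multiplicative group of the finite field. -/
def IsPrimitiveElement {K : Type*} [Field K] (α : K) : Prop :=
  α ≠ 0 ∧ ∀ β : K, β ≠ 0 → ∃ m : ℕ, β = α ^ m

/-- For `n = 2N`, `N > 1` odd, there is `b ∈ F_{q^2}` such that `(b,0)` is `(2,N)`-admissible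
(`Tr_{2/1}(b) = 0`), yet no primitive `α ∈ F_{q^n}` has `Tr_{n/2}(α) = b` and
`Tr_{n/N}(α) = 0`. -/
theorem genuine_exception (q N : ℕ) (hq : IsPrimePow q) (hN : 1 < N) (hodd : Odd N)
    (K : Type*) [Field K] [Fintype K] (hK : Fintype.card K = q ^ (2 * N)) :
    ∃ b : K, b ^ q ^ 2 = b ∧ Tr q 2 1 b = 0 ∧
      ¬ ∃ α : K, IsPrimitiveElement α ∧ Tr q (2 * N) 2 α = b ∧ Tr q (2 * N) N α = 0 := by
  have hq2 : 2 ≤ q := hq.two_le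
  have hq0 : q ≠ 0 := by omega
  refine ⟨0, zero_pow (pow_ne_zero 2 hq0), ?_, ?_⟩
  · refine Finset.sum_eq_zero fun i _ => zero_pow (pow_ne_zero _ hq0)
  · rintro ⟨α, ⟨hα0, hgen⟩, -, htrN⟩
    have hNpos : 0 < N := by omega
    -- compute Tr q (2*N) N α = α + α ^ q ^ N
    have hdiv : 2 * N / N = 2 := Nat.mul_div_cancel 2 hNpos
    have htr : α + α ^ q ^ N = 0 := by
      have := htrN
      rw [Tr, hdiv, Finset.sum_range_succ, Finset.sum_range_one] at this
      simpa [mul_comm] using this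
    have hqN1 : 1 ≤ q ^ N := Nat.one_le_pow _ _ (by omega)
    have hneg : α ^ (q ^ N - 1) = -1 := by
      refine mul_right_cancel₀ hα0 ?_
      rw [← pow_succ, Nat.sub_add_cancel hqN1]
      linear_combination htr
    have hone : α ^ (2 * (q ^ N - 1)) = 1 := by
      rw [mul_comm, pow_mul, hneg]
      ring
    -- pass to units
    set u : Kˣ := Units.mk0 α hα0 with hu
    have hugen : ∀ v : Kˣ, v ∈ Subgroup.zpowers u := by
      intro v
      obtain ⟨m, hm⟩ := hgen v.val (Units.ne_zero v)
      exact ⟨(m : ℤ), by ext; simp [hu, ← hm]⟩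
    have hord : orderOf u = q ^ (2 * N) - 1 := by
      classical
      rw [orderOf_eq_card_of_forall_mem_zpowers hugen, Nat.card_eq_fintype_card,
        Fintype.card_units, hK]
    have hdvd : orderOf u ∣ 2 * (q ^ N - 1) := by
      apply orderOf_dvd_of_pow_eq_one
      ext
      simpa [hu] using hone
    have h2m : 2 ≤ q ^ N := by
      calc 2 = 2 ^ 1 := rfl
        _ ≤ q ^ 1 := Nat.pow_le_pow_left hq2 1
        _ ≤ q ^ N := Nat.pow_le_pow_right (by omega) hNpos
    have hle : q ^ (2 * N) - 1 ≤ 2 * (q ^ N - 1) := by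
      rw [← hord]
      exact Nat.le_of_dvd (by omega) hdvd
    have hsq : q ^ N * q ^ N = q ^ (2 * N) := by
      rw [two_mul, pow_add]
    have hmm : 2 * q ^ N ≤ q ^ N * q ^ N := Nat.mul_le_mul_right _ h2m
    rw [hsq] at hmm
    omega
end
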